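/- Fix ν ≥ 0 and set p = 2/(2+ν), q = 1 − p. For all reals 0 < ε ≤ t ≤ 1 and every s ∈ [0,1): ε^{−1} ∑_{x=1}^∞ p q^{x−1} [ (h_{ε/t}(s))^x − (h_{ε/t}(h_t(0)·s))^x ] = (p s/(1 − q s)) · ( t^{−1}(1 − h_t(0)) ) / (1 − h_t(0) q s). In other words, the family of laws with generating functions g_t(s) = (p s/(1 − q s)) · (t^{−1}(1 − h_t(0)))/(1 − h_t(0) q s), t ∈ (0,1], is an entrance law for the conditional transition generating functions: starting from the geometric distribution p q^{x−1} at time ε and conditioning on survival at time 1 (which has probability ε), the law at time t has generating function g_t. -/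

import Mathlib

open Filter Finset

/-- The linear fractional generating function `h_a(s)` (with parameter ν). -/
noncomputable def h (ν a s : ℝ) : ℝ :=
  if s = 1 then 1 else 1 - a * (1/(1-s) + ν/2 * (1-a))⁻¹

lemma h_mem (ν : ℝ) (hν : 0 ≤ ν) {a s : ℝ} (ha0 : 0 < a) (ha1 : a ≤ 1)
    (hs0 : 0 ≤ s) (hs1 : s < 1) : 0 ≤ h ν a s ∧ h ν a s < 1 := by
  have hs' : s ≠ 1 := ne_of_lt hs1
  have h1s : 0 < 1 - s := by linarith
  have h1s' : 1 - s ≤ 1 := by linarith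
  have hone : (1:ℝ) ≤ 1/(1-s) := one_le_one_div h1s h1s'
  have hD : 0 < 1/(1-s) + ν/2*(1-a) := by nlinarith
  rw [h, if_neg hs']
  constructor
  · have haD : a ≤ 1/(1-s) + ν/2*(1-a) := by nlinarith
    have : a * (1/(1-s) + ν/2*(1-a))⁻¹ ≤ 1 := by
      rw [← div_eq_mul_inv, div_le_one hD]; exact haD
    linarith
  · have : 0 < a * (1/(1-s) + ν/2*(1-a))⁻¹ := by positivity
    linarith

set_option maxHeartbeats 2000000 in
theorem stmt9 (ν : ℝ) (hν : 0 ≤ ν) (p q : ℝ) (hp : p = 2/(2+ν)) (hq : q = 1 - p)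
    (ε t : ℝ) (hε : 0 < ε) (hεt : ε ≤ t) (ht : t ≤ 1)
    (s : ℝ) (hs : s ∈ Set.Ico (0 : ℝ) 1) :
    HasSum (fun x : ℕ => ε⁻¹ * (p * q ^ x *
        ((h ν (ε/t) s) ^ (x+1) - (h ν (ε/t) (h ν t 0 * s)) ^ (x+1))))
      (p * s / (1 - q * s) * (t⁻¹ * (1 - h ν t 0)) / (1 - h ν t 0 * q * s)) := by
  obtain ⟨hs0, hs1⟩ := hs
  have ht0 : 0 < t := lt_of_lt_of_le hε hεt
  set a := ε/t with hadef
  have ha0 : 0 < a := div_pos hε ht0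
  have ha1 : a ≤ 1 := (div_le_one ht0).mpr hεt
  have h2ν : (0:ℝ) < 2 + ν := by linarith
  have hp0 : 0 < p := by rw [hp]; positivity
  have hq0 : 0 ≤ q := by
    rw [hq, hp, le_sub_iff_add_le, zero_add, div_le_one h2ν]; linarith
  have hq1 : q < 1 := by rw [hq]; linarith
  obtain ⟨hm0, hm1⟩ := h_mem ν hν ht0 ht le_rfl one_pos
  set m := h ν t 0 with hmdef
  have hms0 : 0 ≤ m * s := mul_nonneg hm0 hs0
  have hms1 : m * s < 1 := by nlinarith
  obtain ⟨hA0, hA1⟩ := h_mem ν hν ha0 ha1 hs0 hs1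
  obtain ⟨hB0, hB1⟩ := h_mem ν hν ha0 ha1 hms0 hms1
  set A := h ν a s with hAdef
  set B := h ν a (m * s) with hBdef
  have hqA : |q * A| < 1 := by
    rw [abs_of_nonneg (mul_nonneg hq0 hA0)]; nlinarith
  have hqB : |q * B| < 1 := by
    rw [abs_of_nonneg (mul_nonneg hq0 hB0)]; nlinarith
  have hsum1 : HasSum (fun x : ℕ => (ε⁻¹ * p * A) * (q * A) ^ x)
      ((ε⁻¹ * p * A) * (1 - q * A)⁻¹) := (hasSum_geometric_of_abs_lt_one hqA).mul_left _
  have hsum2 : HasSum (fun x : ℕ => (ε⁻¹ * p * B) * (q * B) ^ x)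
      ((ε⁻¹ * p * B) * (1 - q * B)⁻¹) := (hasSum_geometric_of_abs_lt_one hqB).mul_left _
  have hsum := hsum1.sub hsum2
  have hfun : (fun x : ℕ => (ε⁻¹ * p * A) * (q * A) ^ x - (ε⁻¹ * p * B) * (q * B) ^ x)
      = (fun x : ℕ => ε⁻¹ * (p * q ^ x * (A ^ (x+1) - B ^ (x+1)))) := by
    funext x
    rw [mul_pow, mul_pow]
    ring
  rw [hfun] at hsum
  convert hsum using 1
  case e'_3 => rfl
  clear hsum hsum1 hsum2 hfun hqA hqB
  -- introduce d = ν/2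
  obtain ⟨d, hd⟩ : ∃ d : ℝ, d = ν/2 := ⟨_, rfl⟩
  have hd0 : 0 ≤ d := by rw [hd]; linarith
  have n1d : (1:ℝ) + d ≠ 0 := by positivity
  have hpd : p = 1/(1+d) := by
    rw [hd, hp, div_eq_div_iff h2ν.ne' (by linarith : (1:ℝ)+ν/2 ≠ 0)]; ring
  have hqd : q = d/(1+d) := by
    rw [hq, hpd, eq_div_iff n1d]
    field_simp
    ring
  -- basic facts
  have hs' : s ≠ 1 := ne_of_lt hs1
  have hms' : m * s ≠ 1 := ne_of_lt hms1
  have h1s : (0:ℝ) < 1 - s := by linarith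
  have h1ms : (0:ℝ) < 1 - m * s := by linarith
  have hm' : m = 1 - t * (1 + d * (1 - t))⁻¹ := by
    rw [hd, hmdef, h, if_neg (by norm_num : (0:ℝ) ≠ 1)]; norm_num
  have hA' : A = 1 - a * (1/(1-s) + d * (1 - a))⁻¹ := by
    rw [hd, hAdef, h, if_neg hs']
  have hB' : B = 1 - a * (1/(1-(m*s)) + d * (1 - a))⁻¹ := by
    rw [hd, hBdef, h, if_neg hms']
  -- positivity
  have hD0 : (0:ℝ) < (1 + d * (1 - t)) := by nlinarith
  have hF : (0:ℝ) < ((1 + d * (1 - t)) - ((1 + d * (1 - t)) - t) * s) := by nlinarith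
  have ha1' : (0:ℝ) ≤ 1 - a := by linarith
  have hEA : (0:ℝ) < (1 + d * (1 - a) * (1 - s)) := by
    have k := mul_nonneg (mul_nonneg hd0 ha1') h1s.le; linarith
  have hEB : (0:ℝ) < ((1 + d * (1 - t)) + d * (1 - a) * ((1 + d * (1 - t)) - ((1 + d * (1 - t)) - t) * s)) := by
    have k := mul_nonneg (mul_nonneg hd0 ha1') hF.le; linarith
  have hdA : (0:ℝ) < ((1 + d * (1 - a) * (1 - s)) + d * a * (1 - s)) := by
    have k := mul_nonneg (mul_nonneg hd0 ha0.le) h1s.le; linarith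
  have hdB : (0:ℝ) < (((1 + d * (1 - t)) + d * (1 - a) * ((1 + d * (1 - t)) - ((1 + d * (1 - t)) - t) * s)) + d * a * ((1 + d * (1 - t)) - ((1 + d * (1 - t)) - t) * s)) := by
    have k := mul_nonneg (mul_nonneg hd0 ha0.le) hF.le; linarith
  have hL1 : (0:ℝ) < (1 + d - d * s) := by nlinarith [mul_nonneg hd0 h1s.le]
  have hG : (0:ℝ) < ((1 + d) * (1 + d * (1 - t)) - ((1 + d * (1 - t)) - t) * d * s) := by
    nlinarith [mul_pos hD0 hL1, mul_nonneg (mul_nonneg ht0.le hd0) hs0]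
  -- nonzeroness
  have nD0 : (1 + d * (1 - t)) ≠ 0 := hD0.ne'
  have nF : ((1 + d * (1 - t)) - ((1 + d * (1 - t)) - t) * s) ≠ 0 := hF.ne'
  have nEA : (1 + d * (1 - a) * (1 - s)) ≠ 0 := hEA.ne'
  have nEB : ((1 + d * (1 - t)) + d * (1 - a) * ((1 + d * (1 - t)) - ((1 + d * (1 - t)) - t) * s)) ≠ 0 := hEB.ne'
  have ndA : ((1 + d * (1 - a) * (1 - s)) + d * a * (1 - s)) ≠ 0 := hdA.ne'
  have ndB : (((1 + d * (1 - t)) + d * (1 - a) * ((1 + d * (1 - t)) - ((1 + d * (1 - t)) - t) * s)) + d * a * ((1 + d * (1 - t)) - ((1 + d * (1 - t)) - t) * s)) ≠ 0 := hdB.ne'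
  have nL1 : (1 + d - d * s) ≠ 0 := hL1.ne'
  have nG : ((1 + d) * (1 + d * (1 - t)) - ((1 + d * (1 - t)) - t) * d * s) ≠ 0 := hG.ne'
  have nt : t ≠ 0 := ht0.ne'
  have nε : ε ≠ 0 := hε.ne'
  have na : a ≠ 0 := ha0.ne'
  have n1s : (1 - s) ≠ 0 := h1s.ne'
  have eps : ε⁻¹ = a⁻¹ * t⁻¹ := by
    rw [hadef, inv_div]
    field_simp
  -- polynomial fraction forms
  have hm2 : m = ((1 + d * (1 - t)) - t) / (1 + d * (1 - t)) := by
    rw [hm', sub_div, div_self nD0, div_eq_mul_inv]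
  have eF : 1 - m * s = ((1 + d * (1 - t)) - ((1 + d * (1 - t)) - t) * s) / (1 + d * (1 - t)) := by
    rw [eq_div_iff nD0, hm2]
    field_simp
    try ring
  have eDA : 1/(1-s) + d * (1 - a) = (1 + d * (1 - a) * (1 - s)) / (1 - s) := by
    rw [eq_div_iff n1s]
    field_simp
    try ring
  have eA1 : A = ((1 + d * (1 - a) * (1 - s)) - a * (1 - s)) / (1 + d * (1 - a) * (1 - s)) := by
    rw [eq_div_iff nEA, hA', eDA, inv_div]
    field_simp
    try ring
  have eA2 : 1 - q * A = ((1 + d * (1 - a) * (1 - s)) + d * a * (1 - s)) / ((1+d) * (1 + d * (1 - a) * (1 - s))) := by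
    rw [eq_div_iff (mul_ne_zero n1d nEA), eA1, hqd]
    field_simp
    try ring
  have eGA : ε⁻¹ * p * A * (1 - q * A)⁻¹ = a⁻¹ * t⁻¹ * ((1 + d * (1 - a) * (1 - s)) - a * (1 - s)) / ((1 + d * (1 - a) * (1 - s)) + d * a * (1 - s)) := by
    rw [eA2, eA1, inv_div, eps, hpd]
    field_simp
    try ring
  have eDB : 1/(1-(m*s)) + d * (1 - a) = ((1 + d * (1 - t)) + d * (1 - a) * ((1 + d * (1 - t)) - ((1 + d * (1 - t)) - t) * s)) / ((1 + d * (1 - t)) - ((1 + d * (1 - t)) - t) * s) := by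
    rw [eF, one_div_div, eq_div_iff nF]
    field_simp
    try ring
  have eB1 : B = (((1 + d * (1 - t)) + d * (1 - a) * ((1 + d * (1 - t)) - ((1 + d * (1 - t)) - t) * s)) - a * ((1 + d * (1 - t)) - ((1 + d * (1 - t)) - t) * s)) / ((1 + d * (1 - t)) + d * (1 - a) * ((1 + d * (1 - t)) - ((1 + d * (1 - t)) - t) * s)) := by
    rw [eq_div_iff nEB, hB', eDB, inv_div]
    field_simp
    try ring
  have eB2 : 1 - q * B = (((1 + d * (1 - t)) + d * (1 - a) * ((1 + d * (1 - t)) - ((1 + d * (1 - t)) - t) * s)) + d * a * ((1 + d * (1 - t)) - ((1 + d * (1 - t)) - t) * s)) / ((1+d) * ((1 + d * (1 - t)) + d * (1 - a) * ((1 + d * (1 - t)) - ((1 + d * (1 - t)) - t) * s))) := by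
    rw [eq_div_iff (mul_ne_zero n1d nEB), eB1, hqd]
    field_simp
    try ring
  have eGB : ε⁻¹ * p * B * (1 - q * B)⁻¹ = a⁻¹ * t⁻¹ * (((1 + d * (1 - t)) + d * (1 - a) * ((1 + d * (1 - t)) - ((1 + d * (1 - t)) - t) * s)) - a * ((1 + d * (1 - t)) - ((1 + d * (1 - t)) - t) * s)) / (((1 + d * (1 - t)) + d * (1 - a) * ((1 + d * (1 - t)) - ((1 + d * (1 - t)) - t) * s)) + d * a * ((1 + d * (1 - t)) - ((1 + d * (1 - t)) - t) * s)) := by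
    rw [eB2, eB1, inv_div, eps, hpd]
    field_simp
    try ring
  have eR1 : 1 - m = t / (1 + d * (1 - t)) := by
    rw [eq_div_iff nD0, hm2]
    field_simp
    ring
  have eL1 : 1 - q * s = (1 + d - d * s) / (1 + d) := by
    rw [eq_div_iff n1d, hqd]
    field_simp
    try ring
  have eR2 : 1 - m * q * s = ((1 + d) * (1 + d * (1 - t)) - ((1 + d * (1 - t)) - t) * d * s) / ((1 + d) * (1 + d * (1 - t))) := by
    rw [eq_div_iff (mul_ne_zero n1d nD0), hm2, hqd]
    field_simp
    try ring
  rw [eGA, eGB, eR1, eL1, eR2, hpd]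
  have nG' : (1 + d) * (1 + d * (1 - t)) - d * s * (1 + d * (1 - t) - t) ≠ 0 := by
    convert nG using 1; ring
  have ndB' : 1 + d * (1 - t) + d * (1 - a) * (1 + d * (1 - t) - s * (1 + d * (1 - t) - t)) + d * a * (1 + d * (1 - t) - s * (1 + d * (1 - t) - t)) ≠ 0 := by
    convert ndB using 1; ring
  field_simp
  ring
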